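/- The Σ-algebra homomorphism Σ[ρ] → Σ[X]/(Φ_m(X)) determined by sending the chosen generator t of ρ to the class of X is surjective, and its restriction to the ideal e_prim·Σ[ρ] is bijective. Consequently the primitive part e_prim·Σ[ρ], viewed as a ring with unit e_prim, is isomorphic as a Σ-algebra to Σ[X]/(Φ_m(X)); in particular it is a free Σ-module of rank φ(m), where φ is Euler's totient function. -/

import Mathlib

open MonoidAlgebra Polynomial

namespace CycQuotAux

/-- The geometric sum `∑_{i<p} X^{(m/p)·i}`. -/
noncomputable def G (R : Type*) [CommRing R] (m p : ℕ) : R[X] :=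
  ∑ i ∈ Finset.range p, X ^ (m / p * i)

variable {R : Type*} [CommRing R]

lemma map_G {R' : Type*} [CommRing R'] (f : R →+* R') (m p : ℕ) :
    (G R m p).map f = G R' m p := by
  simp [G, Polynomial.map_sum]

lemma G_mul (m p : ℕ) (hpm : p ∣ m) :
    (X ^ (m / p) - 1 : R[X]) * G R m p = X ^ m - 1 := by
  have h := geom_sum_mul (X ^ (m / p) : R[X]) p
  rw [mul_comm] at h
  have : (G R m p) = ∑ i ∈ Finset.range p, (X ^ (m / p) : R[X]) ^ i := by
    simp [G, pow_mul]
  rw [this, h, ← pow_mul, Nat.div_mul_cancel hpm]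

lemma G_sub_natCast (m p : ℕ) :
    G R m p - (p : R[X]) = ∑ i ∈ Finset.range p, ((X : R[X]) ^ (m / p * i) - 1) := by
  rw [Finset.sum_sub_distrib, Finset.sum_const, Finset.card_range]
  simp [G]

lemma X_pow_sub_one_dvd_G_sub (m p : ℕ) :
    (X ^ (m / p) - 1 : R[X]) ∣ G R m p - (p : R[X]) := by
  rw [G_sub_natCast]
  refine Finset.dvd_sum fun i _ => ?_
  rw [pow_mul]
  simpa using sub_dvd_pow_sub_pow ((X : R[X]) ^ (m / p)) 1 i

lemma X_pow_sub_one_dvd_of_dvd {d n : ℕ} (hdn : d ∣ n) :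
    (X ^ d - 1 : R[X]) ∣ X ^ n - 1 := by
  obtain ⟨s, rfl⟩ := hdn
  rw [pow_mul]
  simpa using sub_dvd_pow_sub_pow ((X : R[X]) ^ d) 1 s

lemma cyclotomic_dvd_X_pow_sub_one' {d : ℕ} (hd : 0 < d) :
    cyclotomic d R ∣ X ^ d - 1 := by
  rw [← prod_cyclotomic_eq_X_pow_sub_one hd R]
  exact Finset.dvd_prod_of_mem _ (Nat.mem_divisors_self d hd.ne')

lemma Xm_sub_one_dvd_G_mul (m p : ℕ) (hpm : p ∣ m) :
    (X ^ m - 1 : R[X]) ∣ G R m p * (G R m p - (p : R[X])) := by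
  obtain ⟨c, hc⟩ := X_pow_sub_one_dvd_G_sub (R := R) m p
  rw [hc, mul_comm (G R m p), mul_assoc, mul_comm c, ← mul_assoc, G_mul m p hpm]
  exact Dvd.intro c rfl

lemma G_eq_prod (m p : ℕ) (hp : p.Prime) (hpm : p ∣ m) (hm : 0 < m) :
    G ℤ m p = ∏ x ∈ m.divisors \ (m / p).divisors, cyclotomic x ℤ := by
  have hd : m / p ∈ m.properDivisors :=
    Nat.mem_properDivisors.2 ⟨Nat.div_dvd_of_dvd hpm, Nat.div_lt_self hm hp.one_lt⟩
  have h1 := X_pow_sub_one_mul_prod_cyclotomic_eq_X_pow_sub_one_of_dvd ℤ (Nat.div_dvd_of_dvd hpm) hm.ne'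
  have h2 : (X ^ (m / p) - 1 : ℤ[X]) * G ℤ m p = X ^ m - 1 := G_mul m p hpm
  have hmp : 0 < m / p := Nat.div_pos (Nat.le_of_dvd hm hpm) hp.pos
  have hne : (X ^ (m / p) - 1 : ℤ[X]) ≠ 0 := by
    have : ((X : ℤ[X]) ^ (m / p) - C 1).Monic := monic_X_pow_sub_C 1 hmp.ne'
    simpa using this.ne_zero
  exact mul_left_cancel₀ hne (h2.trans h1.symm)

lemma cyclotomic_dvd_G (m p : ℕ) (hp : p.Prime) (hpm : p ∣ m) (hm : 0 < m) :
    cyclotomic m R ∣ G R m p := by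
  have hZ : cyclotomic m ℤ ∣ G ℤ m p := by
    rw [G_eq_prod m p hp hpm hm]
    refine Finset.dvd_prod_of_mem _ ?_
    rw [Finset.mem_sdiff, Nat.mem_divisors]
    refine ⟨⟨dvd_rfl, hm.ne'⟩, fun hmem => ?_⟩
    obtain ⟨hdvd', hne'⟩ := Nat.mem_divisors.1 hmem
    have hle := Nat.le_of_dvd (Nat.pos_of_ne_zero hne') hdvd'
    exact absurd hle (not_le.2 (Nat.div_lt_self hm hp.one_lt))
  have := map_dvd (Polynomial.mapRingHom (Int.castRingHom R)) hZ
  simpa [map_cyclotomic_int, map_G] using this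

lemma cyclotomic_dvd_G_sub {d m p : ℕ} (hd : 0 < d) (hdp : d ∣ m / p) :
    cyclotomic d R ∣ G R m p - (p : R[X]) :=
  ((cyclotomic_dvd_X_pow_sub_one' hd).trans (X_pow_sub_one_dvd_of_dvd hdp)).trans
    (X_pow_sub_one_dvd_G_sub m p)

lemma psi_dvd_F (m : ℕ) (hm : 0 < m) :
    (∏ d ∈ m.properDivisors, cyclotomic d ℤ) ∣
      ∏ p ∈ m.primeFactors, ((p : ℤ[X]) - G ℤ m p) := by
  have key : (∏ d ∈ m.properDivisors, cyclotomic d ℚ) ∣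
      ∏ p ∈ m.primeFactors, ((p : ℚ[X]) - G ℚ m p) := by
    refine Finset.prod_dvd_of_coprime (fun a ha b hb hab => cyclotomic.isCoprime_rat hab)
      (fun d hd => ?_)
    obtain ⟨hdm, hdlt⟩ := Nat.mem_properDivisors.1 hd
    have hd0 : 0 < d := Nat.pos_of_mem_divisors (Nat.mem_divisors.2 ⟨hdm, hm.ne'⟩)
    have hmd1 : m / d ≠ 1 := by
      intro h
      have := Nat.div_mul_cancel hdm
      rw [h, one_mul] at this
      omega
    set p := (m / d).minFac with hpdef
    have hp : p.Prime := Nat.minFac_prime hmd1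
    have hpmd : p ∣ m / d := Nat.minFac_dvd _
    have hpm : p ∣ m := hpmd.trans (Nat.div_dvd_of_dvd hdm)
    have hpmem : p ∈ m.primeFactors := Nat.mem_primeFactors.2 ⟨hp, hpm, hm.ne'⟩
    obtain ⟨k, hk⟩ := hpmd
    have hmk : m = p * (d * k) := by
      have := Nat.div_mul_cancel hdm
      rw [hk] at this
      rw [← this]; ring
    have hdmp : d ∣ m / p := by
      rw [hmk, Nat.mul_div_cancel_left _ hp.pos]
      exact Dvd.intro k rfl
    have hdvd : cyclotomic d ℚ ∣ (p : ℚ[X]) - G ℚ m p := by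
      have := cyclotomic_dvd_G_sub (R := ℚ) (m := m) (p := p) hd0 hdmp
      simpa using this.neg_right
    exact hdvd.trans (Finset.dvd_prod_of_mem _ hpmem)
  have hmonic : (∏ d ∈ m.properDivisors, cyclotomic d ℤ).Monic :=
    monic_prod_of_monic _ _ fun d _ => cyclotomic.monic d ℤ
  rw [← map_dvd_map (Int.castRingHom ℚ) Int.cast_injective hmonic]
  · simpa [Polynomial.map_prod, map_cyclotomic_int, map_G] using key

end CycQuotAux

/-- The averaging element `e_{ρ'} = (1/|ρ'|)·∑_{h ∈ ρ'} h` of the group algebra `Σ[ρ]`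
associated to a subgroup `ρ'` of the finite group `ρ`. -/
noncomputable def avgIdem (S : Type*) [CommRing S] {ρ : Type*} [CommGroup ρ] [Fintype ρ]
    (ρ' : Subgroup ρ) : MonoidAlgebra S ρ :=
  haveI : Fintype ρ' := Fintype.ofFinite ρ'
  Ring.inverse ((Nat.card ρ' : S)) • ∑ h : ρ', MonoidAlgebra.of S ρ (h : ρ)

/-- The primitive idempotent `e_prim = ∏_{p ∣ m prime} (1 − e_{ρ_p})` of the group algebra
`Σ[ρ]` of a cyclic group `ρ` of order `m` with chosen generator `t`; here `ρ_p` is the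
unique subgroup of prime order `p`, namely the one generated by `t^(m/p)`. -/
noncomputable def primIdem (S : Type*) [CommRing S] {ρ : Type*} [CommGroup ρ] [Fintype ρ]
    (m : ℕ) (t : ρ) : MonoidAlgebra S ρ :=
  ∏ p ∈ m.primeFactors, (1 - avgIdem S (Subgroup.zpowers (t ^ (m / p))))

/-- The `Σ`-algebra homomorphism `Σ[ρ] → Σ[X]/(Φ_m(X))` sending the chosen generator `t`
to the class of `X` is surjective, and restricts to a bijection from the ideal
`e_prim·Σ[ρ]` onto `Σ[X]/(Φ_m(X))`; consequently the primitive part `e_prim·Σ[ρ]` is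
isomorphic as a `Σ`-algebra to `Σ[X]/(Φ_m(X))`, and in particular it is a free
`Σ`-module of rank `φ(m)`. -/
theorem primitivePart_iso_cyclotomic_quotient
    (S : Type*) [CommRing S] [Nontrivial S] (ρ : Type*) [CommGroup ρ] [Fintype ρ]
    (m : ℕ) (hm : 0 < m) (hcard : Fintype.card ρ = m) (hu : IsUnit (m : S))
    (t : ρ) (ht : ∀ g : ρ, g ∈ Subgroup.zpowers t) :
    ∃ π : MonoidAlgebra S ρ →ₐ[S] S[X] ⧸ Ideal.span {cyclotomic m S},
      π (MonoidAlgebra.of S ρ t) = Ideal.Quotient.mk (Ideal.span {cyclotomic m S}) X ∧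
      Function.Surjective π ∧
      Set.BijOn π (Ideal.span {primIdem S m t} : Set (MonoidAlgebra S ρ)) Set.univ ∧
      Module.Free S (Submodule.restrictScalars S (Ideal.span {primIdem S m t})) ∧
      Module.finrank S (Submodule.restrictScalars S (Ideal.span {primIdem S m t})) =
        m.totient := by
  classical
  set I₀ : Ideal S[X] := Ideal.span {cyclotomic m S} with hI₀def
  have hordt : orderOf t = m := by
    rw [orderOf_eq_card_of_forall_mem_zpowers ht, Nat.card_eq_fintype_card, hcard]
  have htm : t ^ m = 1 := by rw [← hordt]; exact pow_orderOf_eq_one t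
  set σ : S[X] →ₐ[S] MonoidAlgebra S ρ := Polynomial.aeval (MonoidAlgebra.of S ρ t) with hσdef
  have hσpow : ∀ n : ℕ, σ (X ^ n) = MonoidAlgebra.of S ρ (t ^ n) := fun n => by
    rw [map_pow, hσdef, Polynomial.aeval_X, ← map_pow]
  have hσm : σ (X ^ m - 1 : S[X]) = 0 := by
    rw [map_sub, map_one, hσpow, htm, map_one, sub_self]
  -- splitting X^m - 1 = Φ_m * Ψ
  have hsplit : cyclotomic m S * (∏ d ∈ m.properDivisors, cyclotomic d S)
      = X ^ m - 1 := by
    rw [← prod_cyclotomic_eq_X_pow_sub_one hm S, ← Nat.cons_self_properDivisors hm.ne',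
      Finset.prod_cons]
  have hcyc_dvd : cyclotomic m S ∣ (X ^ m - 1 : S[X]) := ⟨_, hsplit.symm⟩
  -- kernel of σ
  have hmonXm : ((X : S[X]) ^ m - 1).Monic := by
    simpa using monic_X_pow_sub_C (1 : S) hm.ne'
  have hker : ∀ P : S[X], σ P = 0 → (X ^ m - 1 : S[X]) ∣ P := by
    intro P hP
    have hPr : (X ^ m - 1 : S[X]) * (P /ₘ (X ^ m - 1)) + P %ₘ (X ^ m - 1) = P := by
      rw [add_comm]; exact modByMonic_add_div P (X ^ m - 1)
    set r := P %ₘ (X ^ m - 1 : S[X]) with hrdef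
    have hσr : σ r = 0 := by
      have : σ P = σ (X ^ m - 1) * σ (P /ₘ (X ^ m - 1)) + σ r := by
        rw [← map_mul, ← map_add, hPr]
      rw [hP, hσm, zero_mul, zero_add] at this
      exact this.symm
    suffices hr0 : r = 0 by
      rw [hr0, add_zero] at hPr
      exact Dvd.intro _ hPr
    by_cases hr0 : r = 0
    · exact hr0
    have hdeg : r.natDegree < m := by
      have h1 := degree_modByMonic_lt P hmonXm
      have h2 : ((X : S[X]) ^ m - 1).degree = (m : ℕ) := by
        simpa using degree_X_pow_sub_C hm (1 : S)
      rw [← hrdef, h2] at h1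
      exact (natDegree_lt_iff_degree_lt hr0).2 h1
    have hexp : σ r = ∑ i ∈ Finset.range m, MonoidAlgebra.single (t ^ i) (r.coeff i) := by
      rw [hσdef, Polynomial.aeval_eq_sum_range' hdeg]
      refine Finset.sum_congr rfl fun i _ => ?_
      rw [← map_pow]
      show r.coeff i • MonoidAlgebra.single (t ^ i) (1 : S) = _
      rw [MonoidAlgebra.smul_single', mul_one]
    have hcoef : ∀ j, j < m → r.coeff j = 0 := by
      intro j hj
      have h0 : (∑ i ∈ Finset.range m, MonoidAlgebra.single (t ^ i) (r.coeff i)) = 0 := by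
        rw [← hexp, hσr]
      have h1 := DFunLike.congr_fun (congrArg MonoidAlgebra.coeff h0) (t ^ j)
      rw [MonoidAlgebra.coeff_sum, Finsupp.finset_sum_apply] at h1
      have h2 : ∀ i ∈ Finset.range m,
          (MonoidAlgebra.single (t ^ i) (r.coeff i)).coeff (t ^ j) = if i = j then r.coeff i else 0 := by
        intro i hi
        rw [MonoidAlgebra.coeff_single, Finsupp.single_apply]
        congr 1
        simp only [eq_iff_iff]
        constructor
        · intro hij
          exact pow_injOn_Iio_orderOf (by simpa [hordt] using Finset.mem_range.1 hi)
            (by simpa [hordt] using hj) hij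
        · intro hij; rw [hij]
      rw [Finset.sum_congr rfl h2, Finset.sum_ite_eq' (Finset.range m) j] at h1
      simpa [Finset.mem_range.2 hj] using h1
    exact absurd (Polynomial.ext fun i => by
      rcases lt_or_ge i m with h | h
      · simpa using hcoef i h
      · simpa using coeff_eq_zero_of_natDegree_lt (lt_of_lt_of_le hdeg h)) hr0
  -- surjectivity of σ
  have hσsurj : Function.Surjective σ := by
    intro a
    induction a using MonoidAlgebra.induction_on with
    | of g =>
      obtain ⟨n, rfl⟩ := mem_powers_iff_mem_zpowers.mpr (ht g)
      exact ⟨X ^ n, hσpow n⟩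
    | add f g hf hg =>
      obtain ⟨Pf, rfl⟩ := hf; obtain ⟨Pg, rfl⟩ := hg
      exact ⟨Pf + Pg, map_add σ _ _⟩
    | smul c f hf =>
      obtain ⟨P, rfl⟩ := hf
      exact ⟨C c * P, by rw [map_mul, hσdef, Polynomial.aeval_C, ← Algebra.smul_def]⟩
  -- construction of π
  have hKle : RingHom.ker σ ≤ I₀ := by
    intro P hP
    rw [RingHom.mem_ker] at hP
    exact Ideal.mem_span_singleton.2 (hcyc_dvd.trans (hker P hP))
  set e1 : (S[X] ⧸ RingHom.ker σ) ≃ₐ[S] MonoidAlgebra S ρ :=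
    Ideal.quotientKerAlgEquivOfSurjective hσsurj with he1def
  set ψ : (S[X] ⧸ RingHom.ker σ) →ₐ[S] (S[X] ⧸ I₀) :=
    Ideal.Quotient.liftₐ _ (Ideal.Quotient.mkₐ S I₀) (fun a ha => by
      rw [Ideal.Quotient.mkₐ_eq_mk]
      exact Ideal.Quotient.eq_zero_iff_mem.2 (hKle ha)) with hψdef
  set π : MonoidAlgebra S ρ →ₐ[S] (S[X] ⧸ I₀) := ψ.comp e1.symm.toAlgHom with hπdef
  have he1mk : ∀ P : S[X], e1 (Ideal.Quotient.mk (RingHom.ker σ) P) = σ P := by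
    intro P
    rw [he1def]
    rfl
  have hπσ : ∀ P : S[X], π (σ P) = Ideal.Quotient.mk I₀ P := by
    intro P
    have h2 : e1.symm (σ P) = Ideal.Quotient.mk (RingHom.ker σ) P := by
      rw [← he1mk P, AlgEquiv.symm_apply_apply]
    show ψ (e1.symm (σ P)) = _
    rw [h2, hψdef, Ideal.Quotient.liftₐ_apply]
    rfl
  -- prime facts
  have hpfacts : ∀ p ∈ m.primeFactors, p.Prime ∧ p ∣ m := fun p hp =>
    ⟨(Nat.mem_primeFactors.1 hp).1, (Nat.mem_primeFactors.1 hp).2.1⟩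
  have hpu : ∀ p ∈ m.primeFactors, IsUnit ((p : ℕ) : S) := fun p hp =>
    isUnit_of_dvd_unit (Nat.cast_dvd_cast (hpfacts p hp).2) hu
  have hog : ∀ p ∈ m.primeFactors, orderOf (t ^ (m / p)) = p := by
    intro p hp
    obtain ⟨hpp, hpm⟩ := hpfacts p hp
    rw [orderOf_pow, hordt, Nat.gcd_eq_right (Nat.div_dvd_of_dvd hpm),
      Nat.div_div_self hpm hm.ne']
  have hsum : ∀ p ∈ m.primeFactors, ∀ (inst : Fintype ↥(Subgroup.zpowers (t ^ (m / p)))),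
      (∑ h : ↥(Subgroup.zpowers (t ^ (m / p))), MonoidAlgebra.of S ρ (h : ρ))
        = ∑ i ∈ Finset.range p, MonoidAlgebra.of S ρ ((t ^ (m / p)) ^ i) := by
    intro p hp inst
    obtain ⟨hpp, hpm⟩ := hpfacts p hp
    refine (Finset.sum_bij (fun (i : ℕ) (hi : i ∈ Finset.range p) =>
      (⟨(t ^ (m / p)) ^ i, Subgroup.pow_mem _ (Subgroup.mem_zpowers _) i⟩ :
        ↥(Subgroup.zpowers (t ^ (m / p)))))
      (fun a ha => Finset.mem_univ _) ?_ ?_ ?_).symm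
    · intro a ha b hb hab
      have h := Subtype.mk_eq_mk.1 hab
      exact pow_injOn_Iio_orderOf (by simpa [hog p hp] using Finset.mem_range.1 ha)
        (by simpa [hog p hp] using Finset.mem_range.1 hb) h
    · rintro ⟨h, hh⟩ -
      obtain ⟨n, rfl⟩ := mem_powers_iff_mem_zpowers.mpr hh
      refine ⟨n % p, Finset.mem_range.2 (Nat.mod_lt _ hpp.pos), ?_⟩
      refine Subtype.ext ?_
      show (t ^ (m / p)) ^ (n % p) = (t ^ (m / p)) ^ n
      have hh2 := pow_mod_orderOf (t ^ (m / p)) n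
      rw [hog p hp] at hh2
      exact hh2
    · intro a ha; rfl
  have hσG : ∀ p ∈ m.primeFactors, σ (CycQuotAux.G S m p)
      = ∑ i ∈ Finset.range p, MonoidAlgebra.of S ρ ((t ^ (m / p)) ^ i) := by
    intro p hp
    rw [CycQuotAux.G, map_sum]
    exact Finset.sum_congr rfl fun i _ => by rw [hσpow, pow_mul]
  have havg : ∀ p ∈ m.primeFactors, avgIdem S (Subgroup.zpowers (t ^ (m / p)))
      = Ring.inverse ((p : ℕ) : S) • σ (CycQuotAux.G S m p) := by
    intro p hp
    simp only [avgIdem]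
    rw [hsum p hp _, hσG p hp, Nat.card_zpowers, hog p hp]
  have hσC : ∀ c : S, σ (C c) = c • 1 := fun c => by
    rw [hσdef, Polynomial.aeval_C, Algebra.algebraMap_eq_smul_one]
  set EP : S[X] :=
    ∏ p ∈ m.primeFactors, (1 - C (Ring.inverse ((p : ℕ) : S)) * CycQuotAux.G S m p)
    with hEPdef
  have hEP : σ EP = primIdem S m t := by
    rw [hEPdef, map_prod, primIdem]
    refine Finset.prod_congr rfl fun p hp => ?_
    rw [map_sub, map_one, map_mul, hσC, havg p hp, smul_mul_assoc, one_mul]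
  -- divisibility facts over S
  have hΨdvd : (∏ d ∈ m.properDivisors, cyclotomic d S)
      ∣ ∏ p ∈ m.primeFactors, (((p : ℕ) : S[X]) - CycQuotAux.G S m p) := by
    have h := CycQuotAux.psi_dvd_F m hm
    have h2 := map_dvd (Polynomial.mapRingHom (Int.castRingHom S)) h
    simpa [Polynomial.coe_mapRingHom, Polynomial.map_prod, map_cyclotomic_int,
      CycQuotAux.map_G, Polynomial.map_sub, Polynomial.map_natCast] using h2
  have hFu : (∏ p ∈ m.primeFactors, C ((p : ℕ) : S)) * EP
      = ∏ p ∈ m.primeFactors, (((p : ℕ) : S[X]) - CycQuotAux.G S m p) := by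
    rw [hEPdef, ← Finset.prod_mul_distrib]
    refine Finset.prod_congr rfl fun p hp => ?_
    rw [mul_sub, mul_one, ← mul_assoc, ← C_mul, Ring.mul_inverse_cancel _ (hpu p hp), C_1,
      one_mul, C_eq_natCast]
  have hUnit : IsUnit (∏ p ∈ m.primeFactors, C ((p : ℕ) : S)) :=
    Finset.prod_induction _ IsUnit (fun a b => IsUnit.mul) isUnit_one
      (fun p hp => (hpu p hp).map C)
  have hXmEP : (X ^ m - 1 : S[X]) ∣ cyclotomic m S * EP := by
    obtain ⟨c, hc⟩ := hΨdvd
    obtain ⟨u, hu'⟩ := hUnit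
    have key : (X ^ m - 1 : S[X]) ∣ (↑u) * (cyclotomic m S * EP) := by
      rw [hu', mul_left_comm, hFu, hc, ← mul_assoc, hsplit]
      exact Dvd.intro c rfl
    have heq : (cyclotomic m S * EP) = ↑u⁻¹ * (↑u * (cyclotomic m S * EP)) := by
      rw [← mul_assoc, Units.inv_mul, one_mul]
    rw [heq]
    exact key.mul_left _
  have hkill : primIdem S m t * σ (cyclotomic m S) = 0 := by
    obtain ⟨c, hc⟩ := hXmEP
    have h := congrArg σ hc
    rw [map_mul, map_mul, hσm, zero_mul, hEP] at h
    rw [mul_comm, h]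
  have hidem : primIdem S m t * primIdem S m t = primIdem S m t := by
    have hpoly : (X ^ m - 1 : S[X]) ∣ EP * EP - EP := by
      rw [hEPdef]
      refine Finset.prod_induction _ (fun x => (X ^ m - 1 : S[X]) ∣ x * x - x) ?_ (by simp) ?_
      · intro a b ha hb
        have hab : a * b * (a * b) - a * b = a * a * (b * b - b) + b * (a * a - a) := by ring
        rw [hab]
        exact dvd_add (hb.mul_left _) (ha.mul_left _)
      · intro p hp
        have hG := CycQuotAux.Xm_sub_one_dvd_G_mul (R := S) m p (hpfacts p hp).2
        have hipp : C (Ring.inverse ((p : ℕ) : S)) * C ((p : ℕ) : S) = 1 := by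
          rw [← C_mul, Ring.inverse_mul_cancel _ (hpu p hp), C_1]
        have hCp : ((p : ℕ) : S[X]) = C ((p : ℕ) : S) := (C_eq_natCast _).symm
        rw [hCp] at hG
        have hident : (1 - C (Ring.inverse ((p : ℕ) : S)) * CycQuotAux.G S m p)
              * (1 - C (Ring.inverse ((p : ℕ) : S)) * CycQuotAux.G S m p)
            - (1 - C (Ring.inverse ((p : ℕ) : S)) * CycQuotAux.G S m p)
            = C (Ring.inverse ((p : ℕ) : S)) * C (Ring.inverse ((p : ℕ) : S))
              * (CycQuotAux.G S m p * (CycQuotAux.G S m p - C ((p : ℕ) : S))) := by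
          linear_combination (C (Ring.inverse ((p : ℕ) : S)) * CycQuotAux.G S m p) * hipp
        rw [hident]
        exact hG.mul_left _
    obtain ⟨c, hc⟩ := hpoly
    have h := congrArg σ hc
    rw [map_sub, map_mul, map_mul, hσm, zero_mul, hEP] at h
    exact sub_eq_zero.1 h
  have hπe : π (primIdem S m t) = 1 := by
    rw [← hEP, hπσ, hEPdef, map_prod]
    refine Finset.prod_eq_one fun p hp => ?_
    have hGmem : Ideal.Quotient.mk I₀ (CycQuotAux.G S m p) = 0 :=
      Ideal.Quotient.eq_zero_iff_mem.2 (Ideal.mem_span_singleton.2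
        (CycQuotAux.cyclotomic_dvd_G m p (hpfacts p hp).1 (hpfacts p hp).2 hm))
    rw [map_sub, map_one, map_mul, hGmem, mul_zero, sub_zero]
  have hinjOn : Set.InjOn π (Ideal.span {primIdem S m t} : Set (MonoidAlgebra S ρ)) := by
    intro a ha b hb hab
    obtain ⟨z, hz⟩ := hσsurj (a - b)
    have h0 : Ideal.Quotient.mk I₀ z = 0 := by
      rw [← hπσ z, hz, map_sub, hab, sub_self]
    obtain ⟨c, rfl⟩ := Ideal.mem_span_singleton.1 (Ideal.Quotient.eq_zero_iff_mem.1 h0)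
    have he0 : primIdem S m t * (a - b) = 0 := by
      rw [← hz, map_mul, ← mul_assoc, hkill, zero_mul]
    obtain ⟨ca, hca⟩ := Ideal.mem_span_singleton'.1 ha
    obtain ⟨cb, hcb⟩ := Ideal.mem_span_singleton'.1 hb
    have hab2 : a - b = primIdem S m t * (a - b) := by
      rw [← hca, ← hcb]
      linear_combination (cb - ca) * hidem
    have hz0 : a - b = 0 := by rw [hab2, he0]
    exact sub_eq_zero.1 hz0
  have hπsurj : Function.Surjective π := by
    intro q
    obtain ⟨P, rfl⟩ := Ideal.Quotient.mk_surjective q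
    exact ⟨σ P, hπσ P⟩
  have hsurjOn : Set.SurjOn π (Ideal.span {primIdem S m t} : Set (MonoidAlgebra S ρ))
      Set.univ := by
    intro y _
    obtain ⟨z, rfl⟩ := hπsurj y
    refine ⟨primIdem S m t * z, ?_, ?_⟩
    · exact Ideal.mul_mem_right _ _ (Ideal.mem_span_singleton_self _)
    · rw [map_mul, hπe, one_mul]
  -- module structure
  let pb := AdjoinRoot.powerBasis' (cyclotomic.monic m S)
  haveI hfreeQ : Module.Free S (S[X] ⧸ I₀) := Module.Free.of_basis pb.basis
  have hrankQ : Module.finrank S (S[X] ⧸ I₀) = m.totient := by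
    have h1 : Module.finrank S (AdjoinRoot (cyclotomic m S)) = pb.dim := pb.finrank
    rw [show Module.finrank S (S[X] ⧸ I₀)
        = Module.finrank S (AdjoinRoot (cyclotomic m S)) from rfl, h1]
    show (cyclotomic m S).natDegree = m.totient
    exact natDegree_cyclotomic m S
  let f : (Submodule.restrictScalars S (Ideal.span {primIdem S m t})) →ₗ[S] (S[X] ⧸ I₀) :=
    π.toLinearMap.comp (Submodule.restrictScalars S (Ideal.span {primIdem S m t})).subtype
  have hfbij : Function.Bijective f := by
    constructor
    · intro x y hxy
      exact Subtype.ext (hinjOn x.2 y.2 hxy)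
    · intro y
      obtain ⟨a, ha, hfa⟩ := hsurjOn (Set.mem_univ y)
      exact ⟨⟨a, ha⟩, hfa⟩
  let e2 := LinearEquiv.ofBijective f hfbij
  exact ⟨π, by rw [← hπσ X, hσdef, Polynomial.aeval_X],
    hπsurj, ⟨fun x _ => Set.mem_univ _, hinjOn, hsurjOn⟩,
    Module.Free.of_equiv e2.symm, by rw [e2.finrank_eq, hrankQ]⟩
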